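/- Let C be a complete code with |C| = m. Then C is isomorphic as a neural code to C_m = {∅, {1}, {1,2}, ..., {1,2,...,m-1}}. In particular, there exists an order isomorphism between (C, ⊆) and the chain ∅ ⊊ {1} ⊊ ... ⊊ {1,...,m-1}. -/

import Mathlib

/-- The codeword containment graph of a neural code `C`: vertices are the codewords,
with an edge between distinct codewords iff one strictly contains the other. -/
def CCG {α : Type*} (C : Set (Finset α)) : SimpleGraph C where
  Adj σ τ := σ.1 ⊂ τ.1 ∨ τ.1 ⊂ σ.1
  symm := ⟨fun _ _ h => h.symm⟩
  loopless := ⟨fun σ h => by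
    rcases h with h | h <;> exact (ssubset_irrefl _ h)⟩


/-- The trunk of `σ` in the code `C`. -/
def Trunk {α : Type*} (C : Set (Finset α)) (σ : Finset α) : Set (Finset α) :=
  {c ∈ C | σ ⊆ c}

/-- A subset of a code is a trunk if it is empty or equal to `Trunk C σ` for some `σ`. -/
def IsTrunk {α : Type*} (C : Set (Finset α)) (T : Set (Finset α)) : Prop :=
  T = ∅ ∨ ∃ σ, T = Trunk C σ

/-- A function `f` (restricted to `C`) is a morphism of codes `C → D` if it maps `C`
into `D` and the preimage (within `C`) of every trunk of `D` is a trunk of `C`. -/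
def IsCodeMorphism {α β : Type*} (C : Set (Finset α)) (D : Set (Finset β))
    (f : Finset α → Finset β) : Prop :=
  Set.MapsTo f C D ∧ ∀ T, IsTrunk D T → IsTrunk C {c ∈ C | f c ∈ T}

/-- The chain code `C_m = {∅, {1}, {1,2}, …, {1,…,m-1}}`. -/
def chainCode (m : ℕ) : Set (Finset ℕ) :=
  {s | ∃ i < m, s = Finset.Icc 1 i}

/-- In a complete finite code, every upward-closed subset is a trunk. -/
lemma upset_isTrunk {α : Type*} {C : Set (Finset α)}
    (hcomp : ∀ σ ∈ C, ∀ τ ∈ C, σ ≠ τ → σ ⊂ τ ∨ τ ⊂ σ) (hfin : C.Finite)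
    {S : Set (Finset α)} (hS : S ⊆ C)
    (hup : ∀ c ∈ S, ∀ c' ∈ C, c ⊆ c' → c' ∈ S) : IsTrunk C S := by
  rcases S.eq_empty_or_nonempty with h | hne
  · exact Or.inl h
  · obtain ⟨s₀, hs₀, hmin⟩ := Set.Finite.exists_minimalFor id S (hfin.subset hS) hne
    refine Or.inr ⟨s₀, ?_⟩
    ext c
    constructor
    · intro hc
      refine ⟨hS hc, ?_⟩
      rcases eq_or_ne c s₀ with h | h
      · exact le_of_eq h.symm
      rcases hcomp s₀ (hS hs₀) c (hS hc) (Ne.symm h) with h1 | h1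
      · exact h1.subset
      · exact absurd (le_antisymm h1.subset (hmin hc h1.subset)) h1.ne
    · rintro ⟨hcC, hsc⟩
      exact hup s₀ hs₀ c hcC hsc

theorem complete_code_iso_chain
    (n m : ℕ) (C : Set (Finset (Fin n)))
    (hcomp : ∀ σ ∈ C, ∀ τ ∈ C, σ ≠ τ → σ ⊂ τ ∨ τ ⊂ σ)
    (hcard : C.ncard = m) (hfin : C.Finite) :
    (∃ (f : Finset (Fin n) → Finset ℕ) (g : Finset ℕ → Finset (Fin n)),
        IsCodeMorphism C (chainCode m) f ∧ IsCodeMorphism (chainCode m) C g ∧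
        (∀ c ∈ C, g (f c) = c) ∧ (∀ d ∈ chainCode m, f (g d) = d)) ∧
    Nonempty (C ≃o (chainCode m : Set (Finset ℕ))) := by
  classical
  set D := chainCode m with hD
  have him : D = (fun i => Finset.Icc 1 i) '' Set.Iio m := by
    ext s
    simp only [hD, chainCode, Set.mem_setOf_eq, Set.mem_image, Set.mem_Iio]
    constructor
    · rintro ⟨i, hi, rfl⟩; exact ⟨i, hi, rfl⟩
    · rintro ⟨i, hi, rfl⟩; exact ⟨i, hi, rfl⟩
  have hinj : Function.Injective (fun i : ℕ => Finset.Icc 1 i) := by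
    intro i j h
    have := congrArg Finset.card h
    simp only [Nat.card_Icc] at this
    omega
  have hDfin : D.Finite := by rw [him]; exact (Set.finite_Iio m).image _
  have hDcard : D.ncard = m := by
    rw [him, Set.ncard_image_of_injective _ hinj]
    have : Set.Iio m = ↑(Finset.range m) := by ext x; simp
    rw [this, Set.ncard_coe_finset, Finset.card_range]
  have hDcomp : ∀ σ ∈ D, ∀ τ ∈ D, σ ≠ τ → σ ⊂ τ ∨ τ ⊂ σ := by
    rintro σ hσ τ hτ hne
    obtain ⟨i, hi, rfl⟩ := hσ
    obtain ⟨j, hj, rfl⟩ := hτ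
    have hij : i ≠ j := fun h => hne (by rw [h])
    rcases hij.lt_or_gt with h | h
    · exact Or.inl (ssubset_iff_subset_ne.mpr ⟨Finset.Icc_subset_Icc_right h.le, hne⟩)
    · exact Or.inr (ssubset_iff_subset_ne.mpr ⟨Finset.Icc_subset_Icc_right h.le, hne.symm⟩)
  letI : LinearOrder ↥C :=
    { (inferInstance : PartialOrder ↥C) with
      le_total := by
        rintro ⟨a, ha⟩ ⟨b, hb⟩
        simp only [Subtype.mk_le_mk, Finset.le_iff_subset]
        rcases eq_or_ne a b with h | h
        · exact Or.inl (le_of_eq h)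
        · rcases hcomp a ha b hb h with h1 | h1
          · exact Or.inl h1.subset
          · exact Or.inr h1.subset
      toDecidableLE := Classical.decRel _ }
  letI : LinearOrder ↥D :=
    { (inferInstance : PartialOrder ↥D) with
      le_total := by
        rintro ⟨a, ha⟩ ⟨b, hb⟩
        simp only [Subtype.mk_le_mk, Finset.le_iff_subset]
        rcases eq_or_ne a b with h | h
        · exact Or.inl (le_of_eq h)
        · rcases hDcomp a ha b hb h with h1 | h1
          · exact Or.inl h1.subset
          · exact Or.inr h1.subset
      toDecidableLE := Classical.decRel _ }
  letI : Fintype ↥C := hfin.fintype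
  letI : Fintype ↥D := hDfin.fintype
  have hc1 : Fintype.card ↥C = m := by
    rw [← Nat.card_eq_fintype_card, Nat.card_coe_set_eq, hcard]
  have hc2 : Fintype.card ↥D = m := by
    rw [← Nat.card_eq_fintype_card, Nat.card_coe_set_eq, hDcard]
  let e : ↥C ≃o ↥D := (monoEquivOfFin ↥C hc1).symm.trans (monoEquivOfFin ↥D hc2)
  let f : Finset (Fin n) → Finset ℕ :=
    fun c => if h : c ∈ C then (e ⟨c, h⟩ : ↥D).1 else ∅
  let g : Finset ℕ → Finset (Fin n) :=
    fun d => if h : d ∈ D then (e.symm ⟨d, h⟩ : ↥C).1 else ∅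
  have hfmaps : Set.MapsTo f C D := by
    intro c hc
    simp only [f, dif_pos hc]
    exact (e ⟨c, hc⟩).2
  have hgmaps : Set.MapsTo g D C := by
    intro d hd
    simp only [g, dif_pos hd]
    exact (e.symm ⟨d, hd⟩).2
  have hfmono : ∀ c ∈ C, ∀ c' ∈ C, c ⊆ c' → f c ⊆ f c' := by
    intro c hc c' hc' h
    simp only [f, dif_pos hc, dif_pos hc']
    exact e.monotone (Subtype.mk_le_mk.mpr h)
  have hgmono : ∀ d ∈ D, ∀ d' ∈ D, d ⊆ d' → g d ⊆ g d' := by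
    intro d hd d' hd' h
    simp only [g, dif_pos hd, dif_pos hd']
    exact e.symm.monotone (Subtype.mk_le_mk.mpr h)
  have hfmor : IsCodeMorphism C D f := by
    refine ⟨hfmaps, ?_⟩
    rintro T (rfl | ⟨σ, rfl⟩)
    · exact Or.inl (by ext c; simp)
    · apply upset_isTrunk hcomp hfin (fun c hc => hc.1)
      rintro c ⟨hcC, _, hσ⟩ c' hc' hsub
      exact ⟨hc', hfmaps hc', hσ.trans (hfmono c hcC c' hc' hsub)⟩
  have hgmor : IsCodeMorphism D C g := by
    refine ⟨hgmaps, ?_⟩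
    rintro T (rfl | ⟨σ, rfl⟩)
    · exact Or.inl (by ext c; simp)
    · apply upset_isTrunk hDcomp hDfin (fun d hd => hd.1)
      rintro d ⟨hdD, _, hσ⟩ d' hd' hsub
      exact ⟨hd', hgmaps hd', hσ.trans (hgmono d hdD d' hd' hsub)⟩
  have hgf : ∀ c ∈ C, g (f c) = c := by
    intro c hc
    have hf : f c = (e ⟨c, hc⟩ : ↥D).1 := dif_pos hc
    rw [hf]
    simp only [g, dif_pos (e ⟨c, hc⟩).2]
    have : (⟨(e ⟨c, hc⟩ : ↥D).1, (e ⟨c, hc⟩).2⟩ : ↥D) = e ⟨c, hc⟩ := rfl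
    rw [this, e.symm_apply_apply]
  have hfg : ∀ d ∈ D, f (g d) = d := by
    intro d hd
    have hg : g d = (e.symm ⟨d, hd⟩ : ↥C).1 := dif_pos hd
    rw [hg]
    simp only [f, dif_pos (e.symm ⟨d, hd⟩).2]
    have : (⟨(e.symm ⟨d, hd⟩ : ↥C).1, (e.symm ⟨d, hd⟩).2⟩ : ↥C) = e.symm ⟨d, hd⟩ := rfl
    rw [this, e.apply_symm_apply]
  exact ⟨⟨f, g, hfmor, hgmor, hgf, hfg⟩, ⟨e⟩⟩
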